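/- The M-system reduces to the discrete Darboux system under the parametrisation N^{lm} = −M^{lm}/M^{ll}. Precisely, let l, m, p be distinct indices and M^{ab} (a,b ∈ {l,m,p}) complex numbers with M^{ll} ≠ 0, M^{mm} ≠ 0, M^{pp} ≠ 0 and M^{ll}M^{pp} − M^{lp}M^{pl} ≠ 0. Define N^{ab} = −M^{ab}/M^{aa} for a ≠ b, and define the shifted values by the M-system: M^{lm}_p = M^{lm} − M^{lp}M^{pm}/M^{pp}, M^{ll}_p = M^{ll} − M^{lp}M^{pl}/M^{pp}. Then (i) N^{lm}_p := −M^{lm}_p/M^{ll}_p satisfies the discrete Darboux equation N^{lm}_p = (N^{lm} + N^{lp}N^{pm})/(1 − N^{lp}N^{pl}), and (ii) M^{ll}_m = (1 − N^{lm}N^{ml})·M^{ll} whenever M^{mm} ≠ 0, where M^{ll}_m = M^{ll} − M^{lm}M^{ml}/M^{mm}. -/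

import Mathlib

/-- The M-system reduces to the discrete Darboux system under the parametrisation
`N^{lm} = −M^{lm}/M^{ll}`: (i) the shifted quantity `N^{lm}_p = −M^{lm}_p/M^{ll}_p`
satisfies the discrete Darboux equation, and (ii) the potentials `M^{ll}` satisfy
`M^{ll}_m = (1 − N^{lm}N^{ml})·M^{ll}`. -/
theorem Msystem_to_darboux (Mll Mmm Mpp Mlm Mml Mlp Mpl Mmp Mpm : ℂ)
    (hll : Mll ≠ 0) (hmm : Mmm ≠ 0) (hpp : Mpp ≠ 0)
    (hden : Mll * Mpp - Mlp * Mpl ≠ 0) :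
    (-(Mlm - Mlp * Mpm / Mpp) / (Mll - Mlp * Mpl / Mpp)
        = ((-(Mlm / Mll)) + (-(Mlp / Mll)) * (-(Mpm / Mpp)))
            / (1 - (-(Mlp / Mll)) * (-(Mpl / Mpp))))
      ∧ (Mll - Mlm * Mml / Mmm
          = (1 - (-(Mlm / Mll)) * (-(Mml / Mmm))) * Mll) := by
  have h1 : Mll - Mlp * Mpl / Mpp ≠ 0 := by
    intro h
    apply hden
    have : Mll = Mlp * Mpl / Mpp := by linear_combination h
    rw [this]; field_simp; ring
  have h2 : 1 - (-(Mlp / Mll)) * (-(Mpl / Mpp)) ≠ 0 := by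
    have : 1 - (-(Mlp / Mll)) * (-(Mpl / Mpp))
        = (Mll * Mpp - Mlp * Mpl) / (Mll * Mpp) := by
      field_simp
    rw [this]
    exact div_ne_zero hden (mul_ne_zero hll hpp)
  constructor
  · rw [div_eq_div_iff h1 h2]
    field_simp
    ring
  · field_simp
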